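/- Let $0 < p \le 1$ and let $(\mathcal{M}, d)$ be a $p$-metric space. Fix $t > 1$ and choose $0 < s < 1$ with $\sqrt{t} = (1+s)/(1-s)$. Suppose $(x_n)_{n \ge 0}$ is a sequence in $\mathcal{M}$ (with all $x_n$ distinct from $x_0$ for $n \ge 1$) such that $d(x_n, x_0) / d(x_{n+1}, x_0) < s^{1/p}$ for all $n \ge 1$. Set $r_n = t^{-1/2} d^p(x_n, x_0)$ for $n \ge 1$ and $r_0 = 0$. Then for all distinct $m, n \in \mathbb{N} \cup \{0\}$: $r_n + r_m \le \sqrt{t}\,|r_n - r_m|$, $d^p(x_n, x_m) \ge r_n + r_m$, and $d^p(x_n, x_m) \le t |r_n - r_m|$. -/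

import Mathlib

set_option maxHeartbeats 1000000 in
/-- Quantitative separation estimates for a rapidly escaping (or converging) sequence in
a `p`-metric space (Lemma 3.8 of the paper). -/
theorem stmt_13
    (p : ℝ) (hp : 0 < p) (hp1 : p ≤ 1)
    (M : Type*) (d : M → M → ℝ)
    (hnn : ∀ x y, 0 ≤ d x y)
    (hsymm : ∀ x y, d x y = d y x)
    (heq : ∀ x y, d x y = 0 ↔ x = y)
    (htri : ∀ x y z, d x z ^ p ≤ d x y ^ p + d y z ^ p)
    (t s : ℝ) (ht : 1 < t) (hs0 : 0 < s) (hs1 : s < 1)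
    (hst : Real.sqrt t = (1 + s) / (1 - s))
    (x : ℕ → M)
    (hne : ∀ n, 1 ≤ n → x n ≠ x 0)
    (hratio : ∀ n, 1 ≤ n → d (x n) (x 0) / d (x (n + 1)) (x 0) < s ^ (1 / p))
    (r : ℕ → ℝ) (hr0 : r 0 = 0)
    (hrdef : ∀ n, 1 ≤ n → r n = t ^ (-(1 : ℝ) / 2) * d (x n) (x 0) ^ p) :
    ∀ m n : ℕ, m ≠ n →
      r n + r m ≤ Real.sqrt t * |r n - r m| ∧
      r n + r m ≤ d (x n) (x m) ^ p ∧
      d (x n) (x m) ^ p ≤ t * |r n - r m| := by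
  have ht0 : (0:ℝ) < t := by linarith
  have hs' : (0:ℝ) < 1 - s := by linarith
  have hq0 : 0 < Real.sqrt t := Real.sqrt_pos.mpr ht0
  have hsq : Real.sqrt t * Real.sqrt t = t := Real.mul_self_sqrt ht0.le
  have hq1 : 1 < Real.sqrt t := by
    rw [hst, lt_div_iff₀ hs']; linarith
  have hsteq : Real.sqrt t * (1 - s) = 1 + s := by
    rw [hst]; field_simp
  have htinv : t ^ (-(1:ℝ)/2) = 1 / Real.sqrt t := by
    rw [show (-(1:ℝ)/2) = -(1/2) by ring, Real.rpow_neg ht0.le, Real.sqrt_eq_rpow]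
    exact (one_div _).symm
  -- positivity of the distances to x 0
  have hDpos : ∀ n, 1 ≤ n → 0 < d (x n) (x 0) ^ p := by
    intro n hn
    have hd : 0 < d (x n) (x 0) :=
      (hnn _ _).lt_of_ne (fun h => hne n hn ((heq _ _).mp h.symm))
    exact Real.rpow_pos_of_pos hd p
  have hrD : ∀ n, 1 ≤ n → r n = d (x n) (x 0) ^ p / Real.sqrt t := by
    intro n hn
    rw [hrdef n hn, htinv]; ring
  -- single step estimate
  have hstep : ∀ n, 1 ≤ n → d (x n) (x 0) ^ p < s * d (x (n+1)) (x 0) ^ p := by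
    intro n hn
    have ha : 0 ≤ d (x n) (x 0) := hnn _ _
    have hb : 0 < d (x (n+1)) (x 0) :=
      (hnn _ _).lt_of_ne (fun h => hne (n+1) (by omega) ((heq _ _).mp h.symm))
    have h1 : (d (x n) (x 0) / d (x (n+1)) (x 0)) ^ p < (s ^ ((1:ℝ)/p)) ^ p :=
      Real.rpow_lt_rpow (div_nonneg ha hb.le) (hratio n hn) hp
    rw [← Real.rpow_mul hs0.le, one_div, inv_mul_cancel₀ (ne_of_gt hp), Real.rpow_one,
        Real.div_rpow ha hb.le] at h1
    have hbp : 0 < d (x (n+1)) (x 0) ^ p := Real.rpow_pos_of_pos hb p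
    exact (div_lt_iff₀ hbp).mp h1
  -- iterated estimate
  have hkey : ∀ n m, 1 ≤ m → m < n → d (x m) (x 0) ^ p ≤ s * d (x n) (x 0) ^ p := by
    intro n
    induction n with
    | zero => intro m _ h; omega
    | succ k ih =>
      intro m hm1 hmn
      rcases Nat.lt_succ_iff_lt_or_eq.mp hmn with h | h
      · have h1 := ih m hm1 h
        have hk1 : 1 ≤ k := by omega
        have h2 := hstep k hk1
        have hDk1 : 0 < d (x (k+1)) (x 0) ^ p := hDpos (k+1) (by omega)
        nlinarith [mul_lt_mul_of_pos_left h2 hs0,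
          mul_nonneg (mul_pos hs0 hDk1).le (by linarith : (0:ℝ) ≤ 1 - s)]
      · subst h; exact (hstep m hm1).le
  -- main claim for m < n
  have H : ∀ m n : ℕ, m < n →
      r n + r m ≤ Real.sqrt t * |r n - r m| ∧
      r n + r m ≤ d (x n) (x m) ^ p ∧
      d (x n) (x m) ^ p ≤ t * |r n - r m| := by
    intro m n hmn
    have hn1 : 1 ≤ n := by omega
    have hrn : r n = d (x n) (x 0) ^ p / Real.sqrt t := hrD n hn1
    have hDn : 0 < d (x n) (x 0) ^ p := hDpos n hn1
    rcases Nat.eq_zero_or_pos m with hm0 | hm1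
    · subst hm0
      have habs : |r n - r 0| = r n := by
        rw [hr0, sub_zero, abs_of_nonneg (by rw [hrn]; positivity)]
      refine ⟨?_, ?_, ?_⟩
      · rw [habs, hr0, add_zero]
        nlinarith [hrn, div_pos hDn hq0]
      · rw [hr0, add_zero, hrn]
        exact div_le_self hDn.le hq1.le
      · rw [habs, hrn]
        have he : t * (d (x n) (x 0) ^ p / Real.sqrt t) = Real.sqrt t * d (x n) (x 0) ^ p := by
          field_simp
          linear_combination (-1 : ℝ) * hsq
        rw [he]
        nlinarith
    · set A := d (x n) (x 0) ^ p with hAdef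
      set B := d (x m) (x 0) ^ p with hBdef
      have hDm : 0 < B := hDpos m hm1
      have hrm : r m = B / Real.sqrt t := hrD m hm1
      have hkey' : B ≤ s * A := hkey n m hm1 hmn
      have KEY : A + B ≤ Real.sqrt t * (A - B) := by
        nlinarith [mul_le_mul_of_nonneg_left hkey' (by positivity : (0:ℝ) ≤ Real.sqrt t + 1)]
      have hDmn : B < A := by nlinarith
      have habs : |r n - r m| = (A - B) / Real.sqrt t := by
        rw [hrn, hrm, ← sub_div,
          abs_of_nonneg (div_nonneg (by linarith) hq0.le)]
      have h1 : Real.sqrt t * |r n - r m| = A - B := by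
        rw [habs]; field_simp
      have h2 : r n + r m = (A + B) / Real.sqrt t := by
        rw [hrn, hrm, ← add_div]
      have h3 : t * |r n - r m| = Real.sqrt t * (A - B) := by
        rw [habs]; field_simp
        linear_combination (B - A) * hsq
      have hdiv : (A + B) / Real.sqrt t ≤ A - B := by
        rw [div_le_iff₀ hq0]; nlinarith
      have htri1 : A ≤ d (x n) (x m) ^ p + B :=
        htri (x n) (x m) (x 0)
      have htri2 : d (x n) (x m) ^ p ≤ A + B := by
        have h := htri (x n) (x 0) (x m)
        rw [hsymm (x 0) (x m)] at h
        exact h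
      refine ⟨?_, ?_, ?_⟩
      · rw [h1, h2]; exact hdiv
      · rw [h2]; linarith
      · rw [h3]; linarith
  intro m n hmn
  rcases lt_or_gt_of_ne hmn with h | h
  · exact H m n h
  · obtain ⟨h1, h2, h3⟩ := H n m h
    refine ⟨?_, ?_, ?_⟩
    · rw [abs_sub_comm]; linarith
    · rw [hsymm]; linarith
    · rw [hsymm, abs_sub_comm]; linarith
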